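/- For the n-site futile cycle with bifunctional enzyme C_α, at every positive steady state the concentrations satisfy the explicit parameterization s_i = k_α h*_{n−α} (σ^{i−1↓1}/σ^{α↓1}) u^{i−α−1} for i ∈ [1,n], c_i = (μ^{i−1↓1}/μ^{α−1↓1}) e u^{i−α−1} for i ∈ [1,n−1], and d_j = (k_α/h_{n−α})(ν^{n−2↓j}/ν^{n−2↓n−α}) e u^{n−j−α−1} for j ∈ [1,n−1], where u = e/c_α, σ_i = h*_{n−i}/k*_i, μ_i = k_i h*_{n−i}/(k_{i+1} k*_{i+1}), ν_i = h_{i+1} h*_{i+1}/(h_i k*_{n−i}), and υ^{i↓j} denotes the product υ_i υ_{i−1} ⋯ υ_j (equal to 1 if i < j). Conversely, any strictly positive vector of this form (for any e, u > 0) is a positive steady state. -/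

import Mathlib

open Finset

/-- Net forward-chain production rate of substrate `S i` (with conventions
`k 0 = 0`, `kp n = km n = 0`). -/
noncomputable def Ffwd (kp km k : ℕ → ℝ) (s : ℕ → ℝ) (e : ℝ) (c : ℕ → ℝ) (i : ℕ) : ℝ :=
  -(kp i) * s i * e + km i * c i + k (i - 1) * c (i - 1)

/-- Mass-action steady state equations for the covalent modification network
`(n, m, φ)` with bifunctional enzyme `C α`:
forward chain `S i + E ⇌ C i → S (i+1) + E` for `i ∈ [1, n-1]`,
backward chain `S (φ j) + C α ⇌ D j → S (φ (j+1)) + C α` for `j ∈ [1, m-1]`. -/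
noncomputable def CMNSteadyState (n m α : ℕ) (φ : ℕ → ℕ) (kp km k hp hm h : ℕ → ℝ)
    (s : ℕ → ℝ) (e : ℝ) (c d : ℕ → ℝ) : Prop :=
  -- substrate equations
  (∀ i ∈ Finset.Icc 1 n ∪ (Finset.Icc 1 m).image φ,
      (if i ∈ Finset.Icc 1 n then Ffwd kp km k s e c i else 0)
        + ∑ j ∈ Finset.Icc 1 (m - 1),
            ((if φ j = i then -(hp j) * s i * c α + hm j * d j else 0)
              + (if φ (j + 1) = i then h j * d j else 0)) = 0)
  -- enzyme E equation
  ∧ (∑ i ∈ Finset.Icc 1 (n - 1), (-(kp i) * s i * e + (km i + k i) * c i) = 0)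
  -- intermediate complexes C i
  ∧ (∀ i ∈ Finset.Icc 1 (n - 1),
      kp i * s i * e - (km i + k i) * c i
        + (if i = α then
            ∑ j ∈ Finset.Icc 1 (m - 1), (-(hp j) * s (φ j) * c α + (hm j + h j) * d j)
          else 0) = 0)
  -- intermediate complexes D j
  ∧ (∀ j ∈ Finset.Icc 1 (m - 1), hp j * s (φ j) * c α - (hm j + h j) * d j = 0)

/-- Strict positivity of a concentration vector of the network `(n, m, φ)`. -/
def CMNPositive (n m : ℕ) (φ : ℕ → ℕ) (s : ℕ → ℝ) (e : ℝ) (c d : ℕ → ℝ) : Prop :=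
  (∀ i ∈ Finset.Icc 1 n ∪ (Finset.Icc 1 m).image φ, 0 < s i) ∧ 0 < e
    ∧ (∀ i ∈ Finset.Icc 1 (n - 1), 0 < c i) ∧ (∀ j ∈ Finset.Icc 1 (m - 1), 0 < d j)

/-- `k* i = (k i + km i) / (k i * kp i)`. -/
noncomputable def kst (kp km k : ℕ → ℝ) (i : ℕ) : ℝ := (k i + km i) / (k i * kp i)
/-- `h* j = (h j + hm j) / (h j * hp j)`. -/
noncomputable def hst (hp hm h : ℕ → ℝ) (j : ℕ) : ℝ := (h j + hm j) / (h j * hp j)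
/-- `σ i = h* (n-i) / k* i`. -/
noncomputable def sigC (n : ℕ) (kp km k hp hm h : ℕ → ℝ) (i : ℕ) : ℝ :=
  hst hp hm h (n - i) / kst kp km k i
/-- `μ i = k i * h* (n-i) / (k (i+1) * k* (i+1))`. -/
noncomputable def muC (n : ℕ) (kp km k hp hm h : ℕ → ℝ) (i : ℕ) : ℝ :=
  k i * hst hp hm h (n - i) / (k (i + 1) * kst kp km k (i + 1))
/-- `ν i = h (i+1) * h* (i+1) / (h i * k* (n-i))`. -/
noncomputable def nuC (n : ℕ) (kp km k hp hm h : ℕ → ℝ) (i : ℕ) : ℝ :=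
  h (i + 1) * hst hp hm h (i + 1) / (h i * kst kp km k (n - i))

/-- Parameterized substrate concentration
`s i = k α * h* (n-α) * (σ^{i-1↓1} / σ^{α↓1}) * u^(i-α-1)`. -/
noncomputable def sParam (n α : ℕ) (kp km k hp hm h : ℕ → ℝ) (u : ℝ) (i : ℕ) : ℝ :=
  k α * hst hp hm h (n - α)
    * ((∏ x ∈ Finset.Icc 1 (i - 1), sigC n kp km k hp hm h x)
        / (∏ x ∈ Finset.Icc 1 α, sigC n kp km k hp hm h x))
    * u ^ ((i : ℤ) - α - 1)
/-- Parameterized complex concentration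
`c i = (μ^{i-1↓1} / μ^{α-1↓1}) * e * u^(i-α-1)`. -/
noncomputable def cParam (n α : ℕ) (kp km k hp hm h : ℕ → ℝ) (e u : ℝ) (i : ℕ) : ℝ :=
  ((∏ x ∈ Finset.Icc 1 (i - 1), muC n kp km k hp hm h x)
      / (∏ x ∈ Finset.Icc 1 (α - 1), muC n kp km k hp hm h x))
    * e * u ^ ((i : ℤ) - α - 1)
/-- Parameterized complex concentration
`d j = (k α / h (n-α)) * (ν^{n-2↓j} / ν^{n-2↓n-α}) * e * u^(n-j-α-1)`. -/
noncomputable def dParam (n α : ℕ) (kp km k hp hm h : ℕ → ℝ) (e u : ℝ) (j : ℕ) : ℝ :=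
  (k α / h (n - α))
    * ((∏ x ∈ Finset.Icc j (n - 2), nuC n kp km k hp hm h x)
        / (∏ x ∈ Finset.Icc (n - α) (n - 2), nuC n kp km k hp hm h x))
    * e * u ^ ((n : ℤ) - j - α - 1)


set_option linter.unusedSectionVars false

lemma FCunion (n : ℕ) :
    Finset.Icc 1 n ∪ (Finset.Icc 1 n).image (fun j => n + 1 - j) = Finset.Icc 1 n := by
  rw [Finset.union_eq_left]
  intro x hx
  simp only [Finset.mem_image, Finset.mem_Icc] at hx ⊢
  obtain ⟨j, hj, rfl⟩ := hx; omega

lemma sum_ite1 (n i : ℕ) (f : ℕ → ℝ) (hi : 2 ≤ i) (hin : i ≤ n) :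
    ∑ j ∈ Icc 1 (n-1), (if n+1-j = i then f j else 0) = f (n+1-i) := by
  rw [Finset.sum_eq_single_of_mem (n+1-i) (by simp only [Finset.mem_Icc]; omega)]
  · rw [if_pos (by omega)]
  · intro b hb hne; rw [if_neg]; simp only [Finset.mem_Icc] at hb; omega

lemma sum_ite1z (n i : ℕ) (f : ℕ → ℝ) (hi : i < 2) :
    ∑ j ∈ Icc 1 (n-1), (if n+1-j = i then f j else 0) = 0 :=
  Finset.sum_eq_zero fun b hb => by
    rw [if_neg]; simp only [Finset.mem_Icc] at hb; omega

lemma sum_ite2 (n i : ℕ) (g : ℕ → ℝ) (hi : 1 ≤ i) (hin : i ≤ n-1) :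
    ∑ j ∈ Icc 1 (n-1), (if n-j = i then g j else 0) = g (n-i) := by
  rw [Finset.sum_eq_single_of_mem (n-i) (by simp only [Finset.mem_Icc]; omega)]
  · rw [if_pos (by omega)]
  · intro b hb hne; rw [if_neg]; simp only [Finset.mem_Icc] at hb; omega

lemma sum_ite2z (n : ℕ) (g : ℕ → ℝ) :
    ∑ j ∈ Icc 1 (n-1), (if n-j = n then g j else 0) = 0 :=
  Finset.sum_eq_zero fun b hb => by
    rw [if_neg]; simp only [Finset.mem_Icc] at hb; omega

lemma prod_Icc_one_succ (f : ℕ → ℝ) (i : ℕ) (hi : 1 ≤ i) :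
    ∏ x ∈ Icc 1 i, f x = (∏ x ∈ Icc 1 (i-1), f x) * f i := by
  obtain ⟨m, rfl⟩ : ∃ m, i = m + 1 := ⟨i - 1, by omega⟩
  rw [Finset.prod_Icc_succ_top (by omega)]; simp

lemma prod_Icc_bot (f : ℕ → ℝ) (a b : ℕ) (hab : a ≤ b) :
    ∏ x ∈ Icc a b, f x = f a * ∏ x ∈ Icc (a+1) b, f x := by
  have h1 : Icc a b = insert a (Icc (a+1) b) := by
    ext x; simp only [Finset.mem_Icc, Finset.mem_insert]; omega
  rw [h1, Finset.prod_insert (by simp only [Finset.mem_Icc]; omega)]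

section FC
variable {n : ℕ} {kp km k hp hm h : ℕ → ℝ}
variable (hkpos : ∀ i ∈ Finset.Icc 1 (n - 1), 0 < kp i ∧ 0 < km i ∧ 0 < k i)
variable (hhpos : ∀ j ∈ Finset.Icc 1 (n - 1), 0 < hp j ∧ 0 < hm j ∧ 0 < h j)

include hkpos in
lemma kst_pos {i : ℕ} (h1 : 1 ≤ i) (h2 : i ≤ n-1) : 0 < kst kp km k i := by
  obtain ⟨a, b, c⟩ := hkpos i (by simp only [Finset.mem_Icc]; omega)
  exact div_pos (by linarith) (mul_pos c a)

include hhpos in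
lemma hst_pos {j : ℕ} (h1 : 1 ≤ j) (h2 : j ≤ n-1) : 0 < hst hp hm h j := by
  obtain ⟨a, b, c⟩ := hhpos j (by simp only [Finset.mem_Icc]; omega)
  exact div_pos (by linarith) (mul_pos c a)

include hkpos hhpos in
lemma sig_pos {i : ℕ} (h1 : 1 ≤ i) (h2 : i ≤ n-1) : 0 < sigC n kp km k hp hm h i :=
  div_pos (hst_pos hhpos (by omega) (by omega)) (kst_pos hkpos h1 h2)

include hkpos hhpos in
lemma mu_pos {i : ℕ} (h1 : 1 ≤ i) (h2 : i ≤ n-2) : 0 < muC n kp km k hp hm h i := by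
  obtain ⟨a, b, c⟩ := hkpos i (by simp only [Finset.mem_Icc]; omega)
  obtain ⟨a', b', c'⟩ := hkpos (i+1) (by simp only [Finset.mem_Icc]; omega)
  exact div_pos (mul_pos c (hst_pos hhpos (by omega) (by omega)))
    (mul_pos c' (kst_pos hkpos (by omega) (by omega)))

include hkpos hhpos in
lemma nu_pos {i : ℕ} (h1 : 1 ≤ i) (h2 : i ≤ n-2) : 0 < nuC n kp km k hp hm h i := by
  obtain ⟨a, b, c⟩ := hhpos i (by simp only [Finset.mem_Icc]; omega)
  obtain ⟨a', b', c'⟩ := hhpos (i+1) (by simp only [Finset.mem_Icc]; omega)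
  exact div_pos (mul_pos c' (hst_pos hhpos (by omega) (by omega)))
    (mul_pos c (kst_pos hkpos (by omega) (by omega)))

include hkpos hhpos in
lemma prod_sig_pos {m : ℕ} (hm2 : m ≤ n-1) :
    0 < ∏ x ∈ Icc 1 m, sigC n kp km k hp hm h x :=
  Finset.prod_pos fun x hx => by
    simp only [Finset.mem_Icc] at hx
    exact sig_pos hkpos hhpos hx.1 (by omega)

include hkpos hhpos in
lemma prod_mu_pos {m : ℕ} (hm2 : m ≤ n-2) :
    0 < ∏ x ∈ Icc 1 m, muC n kp km k hp hm h x :=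
  Finset.prod_pos fun x hx => by
    simp only [Finset.mem_Icc] at hx
    exact mu_pos hkpos hhpos hx.1 (by omega)

include hkpos hhpos in
lemma prod_nu_pos {a : ℕ} (ha : 1 ≤ a) :
    0 < ∏ x ∈ Icc a (n-2), nuC n kp km k hp hm h x :=
  Finset.prod_pos fun x hx => by
    simp only [Finset.mem_Icc] at hx
    exact nu_pos hkpos hhpos (by omega) hx.2

end FC

section FC2
variable {n α : ℕ} {kp km k hp hm h : ℕ → ℝ} {e u : ℝ}
variable (hkpos : ∀ i ∈ Finset.Icc 1 (n - 1), 0 < kp i ∧ 0 < km i ∧ 0 < k i)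
variable (hhpos : ∀ j ∈ Finset.Icc 1 (n - 1), 0 < hp j ∧ 0 < hm j ∧ 0 < h j)
variable (hα1 : 1 ≤ α) (hα2 : α ≤ n - 1) (hn : 2 ≤ n)

lemma sParam_succ (hu : u ≠ 0) {i : ℕ} (hi : 1 ≤ i) :
    sParam n α kp km k hp hm h u (i+1)
      = sigC n kp km k hp hm h i * u * sParam n α kp km k hp hm h u i := by
  unfold sParam
  have h1 : ((i+1 : ℕ) : ℤ) - α - 1 = ((i:ℤ) - α - 1) + 1 := by push_cast; ring
  rw [show i+1-1 = i from rfl, prod_Icc_one_succ _ i hi, h1, zpow_add₀ hu, zpow_one]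
  ring

lemma cParam_succ (hu : u ≠ 0) {i : ℕ} (hi : 1 ≤ i) :
    cParam n α kp km k hp hm h e u (i+1)
      = muC n kp km k hp hm h i * u * cParam n α kp km k hp hm h e u i := by
  unfold cParam
  have h1 : ((i+1 : ℕ) : ℤ) - α - 1 = ((i:ℤ) - α - 1) + 1 := by push_cast; ring
  rw [show i+1-1 = i from rfl, prod_Icc_one_succ _ i hi, h1, zpow_add₀ hu, zpow_one]
  ring

include hkpos hhpos hα1 hα2 in
lemma sParam_alpha :
    sParam n α kp km k hp hm h u α = k α * kst kp km k α * u ^ (-1 : ℤ) := by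
  unfold sParam
  rw [prod_Icc_one_succ _ α hα1, show ((α:ℤ) - α - 1) = -1 by ring]
  have hP : (∏ x ∈ Finset.Icc 1 (α-1), sigC n kp km k hp hm h x) ≠ 0 :=
    ne_of_gt (prod_sig_pos hkpos hhpos (by omega))
  have hσ : sigC n kp km k hp hm h α ≠ 0 := ne_of_gt (sig_pos hkpos hhpos hα1 hα2)
  have hkst : kst kp km k α ≠ 0 := ne_of_gt (kst_pos hkpos hα1 hα2)
  have key : k α * hst hp hm h (n - α)
      * ((∏ x ∈ Finset.Icc 1 (α-1), sigC n kp km k hp hm h x)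
          / ((∏ x ∈ Finset.Icc 1 (α-1), sigC n kp km k hp hm h x)
              * sigC n kp km k hp hm h α))
      = k α * kst kp km k α := by
    rw [show hst hp hm h (n - α) = sigC n kp km k hp hm h α * kst kp km k α by
      unfold sigC; field_simp]
    field_simp
  rw [key]

include hkpos hhpos hα1 hα2 hn in
lemma sParam_pos (hu : 0 < u) {i : ℕ} (hi1 : 1 ≤ i) (hi2 : i ≤ n) :
    0 < sParam n α kp km k hp hm h u i := by
  obtain ⟨a, b, c⟩ := hkpos α (by simp only [Finset.mem_Icc]; omega)
  refine mul_pos (mul_pos (mul_pos c (hst_pos hhpos (by omega) (by omega))) ?_) ?_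
  · exact div_pos (prod_sig_pos hkpos hhpos (by omega)) (prod_sig_pos hkpos hhpos (by omega))
  · exact zpow_pos hu _

include hkpos hhpos hα1 hα2 hn in
lemma cParam_pos (he : 0 < e) (hu : 0 < u) {i : ℕ} (hi1 : 1 ≤ i) (hi2 : i ≤ n - 1) :
    0 < cParam n α kp km k hp hm h e u i := by
  refine mul_pos (mul_pos ?_ he) (zpow_pos hu _)
  exact div_pos (prod_mu_pos hkpos hhpos (by omega)) (prod_mu_pos hkpos hhpos (by omega))

include hkpos hhpos hα1 hα2 hn in
lemma dParam_pos (he : 0 < e) (hu : 0 < u) {j : ℕ} (hj1 : 1 ≤ j) (hj2 : j ≤ n - 1) :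
    0 < dParam n α kp km k hp hm h e u j := by
  obtain ⟨a, b, c⟩ := hkpos α (by simp only [Finset.mem_Icc]; omega)
  obtain ⟨a', b', c'⟩ := hhpos (n - α) (by simp only [Finset.mem_Icc]; omega)
  refine mul_pos (mul_pos (mul_pos (div_pos c c') ?_) he) (zpow_pos hu _)
  exact div_pos (prod_nu_pos hkpos hhpos hj1) (prod_nu_pos hkpos hhpos (by omega))

end FC2

section FC3
variable {n α : ℕ} {kp km k hp hm h : ℕ → ℝ} {e u : ℝ}
variable (hkpos : ∀ i ∈ Finset.Icc 1 (n - 1), 0 < kp i ∧ 0 < km i ∧ 0 < k i)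
variable (hhpos : ∀ j ∈ Finset.Icc 1 (n - 1), 0 < hp j ∧ 0 < hm j ∧ 0 < h j)
variable (hn : 2 ≤ n)

include hkpos hhpos hn in
lemma prodI : ∀ i, 1 ≤ i → i ≤ n - 1 →
    k 1 * kst kp km k 1 * (∏ x ∈ Icc 1 (i-1), sigC n kp km k hp hm h x)
      = k i * kst kp km k i * (∏ x ∈ Icc 1 (i-1), muC n kp km k hp hm h x) := by
  intro i hi1
  induction i, hi1 using Nat.le_induction with
  | base => intro _; simp
  | succ i hi ih =>
    intro h2
    have ih' := ih (by omega)
    rw [show i+1-1 = i from rfl, prod_Icc_one_succ _ i hi,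
      prod_Icc_one_succ (muC n kp km k hp hm h) i hi]
    have hkst : kst kp km k i ≠ 0 := ne_of_gt (kst_pos hkpos (by omega) (by omega))
    have hkst' : kst kp km k (i+1) ≠ 0 := ne_of_gt (kst_pos hkpos (by omega) (by omega))
    have hk' : k (i+1) ≠ 0 := ne_of_gt (hkpos (i+1) (by simp only [Finset.mem_Icc]; omega)).2.2
    have key : sigC n kp km k hp hm h i * (k i * kst kp km k i)
        = muC n kp km k hp hm h i * (k (i+1) * kst kp km k (i+1)) := by
      unfold sigC muC
      field_simp
    linear_combination sigC n kp km k hp hm h i * ih'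
      + (∏ x ∈ Icc 1 (i-1), muC n kp km k hp hm h x) * key

include hkpos hhpos hn in
lemma prodJ : ∀ t, t ≤ n - 2 →
    (∏ x ∈ Icc (n-1-t) (n-2), nuC n kp km k hp hm h x) * h (n-1-t) * k 1
      = h (n-1) * k (t+1) * (∏ x ∈ Icc 1 t, muC n kp km k hp hm h x) := by
  intro t
  induction t with
  | zero =>
    intro _
    rw [Finset.Icc_eq_empty (by omega)]
    simp
  | succ t ih =>
    intro h2
    have ih' := ih (by omega)
    rw [show n-1-(t+1) = n-2-t by omega] at *
    rw [prod_Icc_bot _ _ _ (by omega), show n-2-t+1 = n-1-t by omega,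
      prod_Icc_one_succ (muC n kp km k hp hm h) (t+1) (by omega),
      show t+1-1 = t from rfl]
    have hbj : h (n-2-t) ≠ 0 := ne_of_gt (hhpos (n-2-t) (by simp only [Finset.mem_Icc]; omega)).2.2
    have hbj' : h (n-1-t) ≠ 0 := ne_of_gt (hhpos (n-1-t) (by simp only [Finset.mem_Icc]; omega)).2.2
    have hkt : k (t+1) ≠ 0 := ne_of_gt (hkpos (t+1) (by simp only [Finset.mem_Icc]; omega)).2.2
    have hkt2 : k (t+2) ≠ 0 := ne_of_gt (hkpos (t+2) (by simp only [Finset.mem_Icc]; omega)).2.2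
    have hkst2 : kst kp km k (t+2) ≠ 0 := ne_of_gt (kst_pos hkpos (by omega) (by omega))
    have key : nuC n kp km k hp hm h (n-2-t) * h (n-2-t) * k (t+1)
        = h (n-1-t) * k (t+2) * muC n kp km k hp hm h (t+1) := by
      unfold nuC muC
      rw [show n-2-t+1 = n-1-t by omega, show n-(n-2-t) = t+2 by omega,
        show n-(t+1) = n-1-t by omega]
      field_simp
    refine mul_left_cancel₀ (a := h (n-1-t) * k (t+1)) (by positivity) ?_
    linear_combination
      (k 1 * (∏ x ∈ Icc (n-1-t) (n-2), nuC n kp km k hp hm h x) * h (n-1-t)) * key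
        + (k (t+2) * muC n kp km k hp hm h (t+1) * h (n-1-t)) * ih'

end FC3

section FC4
variable {n α : ℕ} {kp km k hp hm h : ℕ → ℝ} {e u : ℝ}
variable (hkpos : ∀ i ∈ Finset.Icc 1 (n - 1), 0 < kp i ∧ 0 < km i ∧ 0 < k i)
variable (hhpos : ∀ j ∈ Finset.Icc 1 (n - 1), 0 < hp j ∧ 0 < hm j ∧ 0 < h j)
variable (hn : 2 ≤ n) (hα1 : 1 ≤ α) (hα2 : α ≤ n - 1)

include hkpos hhpos hn hα1 hα2 in
lemma c_of_s : ∀ i, 1 ≤ i → i ≤ n - 1 →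
    kp i * sParam n α kp km k hp hm h u i * e
      = (km i + k i) * cParam n α kp km k hp hm h e u i := by
  intro i hi1 hi2
  obtain ⟨hkp, hkm, hk⟩ := hkpos i (by simp only [Finset.mem_Icc]; omega)
  have e1 := prodI hkpos hhpos hn i hi1 hi2
  have e2 := prodI hkpos hhpos hn α hα1 hα2
  have e3 : (∏ x ∈ Icc 1 α, sigC n kp km k hp hm h x)
      = (∏ x ∈ Icc 1 (α-1), sigC n kp km k hp hm h x) * sigC n kp km k hp hm h α :=
    prod_Icc_one_succ _ α hα1
  have hkstα : kst kp km k α ≠ 0 := ne_of_gt (kst_pos hkpos hα1 hα2)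
  have hksti : kst kp km k i ≠ 0 := ne_of_gt (kst_pos hkpos hi1 hi2)
  have e4 : hst hp hm h (n - α) = sigC n kp km k hp hm h α * kst kp km k α := by
    unfold sigC; field_simp
  have e5 : km i + k i = kp i * (k i * kst kp km k i) := by
    unfold kst; field_simp; ring
  have hB : (∏ x ∈ Icc 1 α, sigC n kp km k hp hm h x) ≠ 0 :=
    ne_of_gt (prod_sig_pos hkpos hhpos (by omega))
  have hD : (∏ x ∈ Icc 1 (α-1), muC n kp km k hp hm h x) ≠ 0 :=
    ne_of_gt (prod_mu_pos hkpos hhpos (by omega))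
  have hs : kp i * (k α * hst hp hm h (n - α)
      * ((∏ x ∈ Icc 1 (i-1), sigC n kp km k hp hm h x)
          / (∏ x ∈ Icc 1 α, sigC n kp km k hp hm h x)))
      = (km i + k i) * ((∏ x ∈ Icc 1 (i-1), muC n kp km k hp hm h x)
          / (∏ x ∈ Icc 1 (α-1), muC n kp km k hp hm h x)) := by
    field_simp
    linear_combination
      (kp i * sigC n kp km k hp hm h α * (∏ x ∈ Icc 1 (α-1), sigC n kp km k hp hm h x)) * e1
      - (kp i * sigC n kp km k hp hm h α * (∏ x ∈ Icc 1 (i-1), sigC n kp km k hp hm h x)) * e2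
      - (kp i * k i * kst kp km k i * (∏ x ∈ Icc 1 (i-1), muC n kp km k hp hm h x)) * e3
      + (kp i * k α * (∏ x ∈ Icc 1 (i-1), sigC n kp km k hp hm h x)
          * (∏ x ∈ Icc 1 (α-1), muC n kp km k hp hm h x)) * e4
      - ((∏ x ∈ Icc 1 (i-1), muC n kp km k hp hm h x)
          * (∏ x ∈ Icc 1 α, sigC n kp km k hp hm h x)) * e5
  unfold sParam cParam
  linear_combination (e * u ^ ((i : ℤ) - α - 1)) * hs

include hkpos hhpos hn hα1 hα2 in
lemma d_of_c : ∀ j, 1 ≤ j → j ≤ n - 1 →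
    h j * dParam n α kp km k hp hm h e u j
      = k (n-j) * cParam n α kp km k hp hm h e u (n-j) := by
  intro j hj1 hj2
  have hJj := prodJ hkpos hhpos hn (n-1-j) (by omega)
  have hJα := prodJ hkpos hhpos hn (α-1) (by omega)
  rw [show n-1-(n-1-j) = j by omega, show n-1-j+1 = n-j by omega, show n-1-j = n-j-1 by omega] at hJj
  rw [show n-1-(α-1) = n-α by omega, show α-1+1 = α by omega] at hJα
  have hk1 : k 1 ≠ 0 := ne_of_gt (hkpos 1 (by simp only [Finset.mem_Icc]; omega)).2.2
  have hhnα : h (n-α) ≠ 0 := ne_of_gt (hhpos (n-α) (by simp only [Finset.mem_Icc]; omega)).2.2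
  have hNα : (∏ x ∈ Icc (n-α) (n-2), nuC n kp km k hp hm h x) ≠ 0 :=
    ne_of_gt (prod_nu_pos hkpos hhpos (by omega))
  have hMα : (∏ x ∈ Icc 1 (α-1), muC n kp km k hp hm h x) ≠ 0 :=
    ne_of_gt (prod_mu_pos hkpos hhpos (by omega))
  have hs : h j * (k α / h (n-α)
      * ((∏ x ∈ Icc j (n-2), nuC n kp km k hp hm h x)
          / (∏ x ∈ Icc (n-α) (n-2), nuC n kp km k hp hm h x)))
      = k (n-j) * ((∏ x ∈ Icc 1 (n-j-1), muC n kp km k hp hm h x)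
          / (∏ x ∈ Icc 1 (α-1), muC n kp km k hp hm h x)) := by
    field_simp
    refine mul_left_cancel₀ hk1 ?_
    linear_combination
      (k α * (∏ x ∈ Icc 1 (α-1), muC n kp km k hp hm h x)) * hJj
      - (k (n-j) * (∏ x ∈ Icc 1 (n-j-1), muC n kp km k hp hm h x)) * hJα
  unfold dParam cParam
  rw [show ((n-j : ℕ) : ℤ) - α - 1 = (n:ℤ) - j - α - 1 by omega,
    show n-j-1 = n-j-1 from rfl]
  linear_combination (e * u ^ ((n : ℤ) - j - α - 1)) * hs

end FC4

section FC5
variable {n α : ℕ} {kp km k hp hm h : ℕ → ℝ} {e u : ℝ}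
variable (hkpos : ∀ i ∈ Finset.Icc 1 (n - 1), 0 < kp i ∧ 0 < km i ∧ 0 < k i)
variable (hhpos : ∀ j ∈ Finset.Icc 1 (n - 1), 0 < hp j ∧ 0 < hm j ∧ 0 < h j)
variable (hn : 2 ≤ n) (hα1 : 1 ≤ α) (hα2 : α ≤ n - 1)

include hkpos hhpos hn hα1 hα2 in
lemma cParam_alpha : cParam n α kp km k hp hm h e u α = e * u ^ (-1 : ℤ) := by
  unfold cParam
  rw [show ((α:ℤ) - α - 1) = -1 by ring,
    div_self (ne_of_gt (prod_mu_pos hkpos hhpos (n := n) (by omega)))]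
  ring

include hkpos hhpos hn hα1 hα2 in
lemma Brel (hu : u ≠ 0) : ∀ j, 1 ≤ j → j ≤ n - 1 →
    hp j * sParam n α kp km k hp hm h u (n+1-j) * cParam n α kp km k hp hm h e u α
      = (hm j + h j) * dParam n α kp km k hp hm h e u j := by
  intro j hj1 hj2
  obtain ⟨hpj, hmj, hj⟩ := hhpos j (by simp only [Finset.mem_Icc]; omega)
  obtain ⟨hkp, hkm, hk⟩ := hkpos (n-j) (by simp only [Finset.mem_Icc]; omega)
  have hA := c_of_s hkpos hhpos hn hα1 hα2 (u := u) (e := e) (n-j) (by omega) (by omega)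
  have hC := d_of_c hkpos hhpos hn hα1 hα2 (u := u) (e := e) j hj1 hj2
  rw [show n+1-j = n-j+1 by omega, sParam_succ hu (by omega : 1 ≤ n - j),
    cParam_alpha hkpos hhpos hn hα1 hα2]
  have hkstnj : kst kp km k (n-j) ≠ 0 := ne_of_gt (kst_pos hkpos (by omega) (by omega))
  have key : hp j * sigC n kp km k hp hm h (n-j) * h j * (km (n-j) + k (n-j))
      = kp (n-j) * (hm j + h j) * k (n-j) := by
    unfold sigC hst kst
    rw [show n - (n-j) = j by omega]
    field_simp
    ring
  have hG : hp j * (sigC n kp km k hp hm h (n-j) * u * sParam n α kp km k hp hm h u (n-j))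
        * (e * u ^ (-1:ℤ))
      = hp j * sigC n kp km k hp hm h (n-j) * (sParam n α kp km k hp hm h u (n-j) * e) := by
    rw [zpow_neg_one]
    field_simp
  rw [hG]
  refine mul_left_cancel₀ (a := kp (n-j) * h j) (by positivity) ?_
  linear_combination (hp j * sigC n kp km k hp hm h (n-j) * h j) * hA
    - (kp (n-j) * (hm j + h j)) * hC
    + cParam n α kp km k hp hm h e u (n-j) * key

end FC5
/-- For the `n`-site futile cycle with bifunctional enzyme `C α`:
(i) every positive steady state satisfies the explicit parameterization
`s i = sParam`, `c i = cParam`, `d j = dParam` with `u = e / c α`;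
(ii) conversely, for every `e, u > 0` the strictly positive vector given by these
formulas is a positive steady state. -/
theorem futile_cycle_steady_state_parameterization
    (n α : ℕ) (hn : 2 ≤ n) (hα : α ∈ Finset.Icc 1 (n - 1))
    (kp km k hp hm h : ℕ → ℝ)
    (hkpos : ∀ i ∈ Finset.Icc 1 (n - 1), 0 < kp i ∧ 0 < km i ∧ 0 < k i)
    (hhpos : ∀ j ∈ Finset.Icc 1 (n - 1), 0 < hp j ∧ 0 < hm j ∧ 0 < h j)
    (hk0 : k 0 = 0) (hkpn : kp n = 0) (hkmn : km n = 0) (hh0 : h 0 = 0) :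
    (∀ (s : ℕ → ℝ) (e : ℝ) (c d : ℕ → ℝ),
        CMNPositive n n (fun j => n + 1 - j) s e c d →
        CMNSteadyState n n α (fun j => n + 1 - j) kp km k hp hm h s e c d →
        (∀ i ∈ Finset.Icc 1 n, s i = sParam n α kp km k hp hm h (e / c α) i)
          ∧ (∀ i ∈ Finset.Icc 1 (n - 1),
              c i = cParam n α kp km k hp hm h e (e / c α) i)
          ∧ (∀ j ∈ Finset.Icc 1 (n - 1),
              d j = dParam n α kp km k hp hm h e (e / c α) j))
    ∧ (∀ e u : ℝ, 0 < e → 0 < u →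
        CMNPositive n n (fun j => n + 1 - j)
          (sParam n α kp km k hp hm h u) e
          (cParam n α kp km k hp hm h e u) (dParam n α kp km k hp hm h e u)
        ∧ CMNSteadyState n n α (fun j => n + 1 - j) kp km k hp hm h
            (sParam n α kp km k hp hm h u) e
            (cParam n α kp km k hp hm h e u) (dParam n α kp km k hp hm h e u)) := by

  simp only [Finset.mem_Icc] at hα
  obtain ⟨hα1, hα2⟩ := hα
  constructor
  ·
    intro s e c d hpos hss
    obtain ⟨hs_pos, he, hc_pos, hd_pos⟩ := hpos
    obtain ⟨hSeq, hEeq, hCeq, hDeq⟩ := hss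
    have hcα : 0 < c α := hc_pos α (by simp only [Finset.mem_Icc]; omega)
    have hu : 0 < e / c α := div_pos he hcα
    have hue : (e / c α) * c α = e := div_mul_cancel₀ _ (ne_of_gt hcα)
    -- B-type relations from the D equations
    have hB : ∀ j, 1 ≤ j → j ≤ n - 1 → hp j * s (n+1-j) * c α = (hm j + h j) * d j := by
      intro j h1 h2
      have h3 := hDeq j (by simp only [Finset.mem_Icc]; omega)
      simp only [] at h3
      linarith
    -- A-type relations from the C equations
    have hA : ∀ i, 1 ≤ i → i ≤ n - 1 → kp i * s i * e = (km i + k i) * c i := by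
      intro i h1 h2
      have h3 := hCeq i (by simp only [Finset.mem_Icc]; omega)
      by_cases hiα : i = α
      · rw [if_pos hiα] at h3
        have hz : ∑ j ∈ Finset.Icc 1 (n-1),
            (-(hp j) * s ((fun j => n + 1 - j) j) * c α + (hm j + h j) * d j) = 0 :=
          Finset.sum_eq_zero fun j hj => by
            simp only [Finset.mem_Icc] at hj
            have := hB j hj.1 hj.2
            simp only []
            linarith
        rw [hz] at h3
        linarith
      · rw [if_neg hiα] at h3
        linarith
    -- telescoped relations k i c i = h (n-i) d (n-i)
    have hKH : ∀ i, 1 ≤ i → i ≤ n - 1 → k i * c i = h (n-i) * d (n-i) := by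
      intro i h1
      induction i, h1 using Nat.le_induction with
      | base =>
        intro _
        have h4 := hSeq 1 (by rw [FCunion]; simp only [Finset.mem_Icc]; omega)
        rw [if_pos (by simp only [Finset.mem_Icc]; omega)] at h4
        simp only [Finset.sum_add_distrib,
          show ∀ j : ℕ, n+1-(j+1) = n-j from fun j => by omega] at h4
        rw [sum_ite1z n 1 _ (by omega), sum_ite2 n 1 _ le_rfl (by omega)] at h4
        unfold Ffwd at h4
        rw [show (1:ℕ)-1 = 0 from rfl, hk0] at h4
        linarith [hA 1 le_rfl (by omega)]
      | succ i hi ihx =>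
        intro h2
        have ih' := ihx (by omega)
        have h4 := hSeq (i+1) (by rw [FCunion]; simp only [Finset.mem_Icc]; omega)
        rw [if_pos (by simp only [Finset.mem_Icc]; omega)] at h4
        simp only [Finset.sum_add_distrib,
          show ∀ j : ℕ, n+1-(j+1) = n-j from fun j => by omega] at h4
        rw [sum_ite1 n (i+1) _ (by omega) (by omega),
          sum_ite2 n (i+1) _ (by omega) (by omega)] at h4
        unfold Ffwd at h4
        rw [show i+1-1 = i from rfl, show n+1-(i+1) = n-i by omega] at h4
        have hB' := hB (n-i) (by omega) (by omega)
        rw [show n+1-(n-i) = i+1 by omega] at hB'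
        linarith [hA (i+1) (by omega) (by omega)]
    -- the substrate recurrence
    have hrec : ∀ i, 1 ≤ i → i ≤ n - 1 →
        s (i+1) = sigC n kp km k hp hm h i * (e / c α) * s i := by
      intro i h1 h2
      obtain ⟨hkp, hkm, hk⟩ := hkpos i (by simp only [Finset.mem_Icc]; omega)
      obtain ⟨hpp, hpm, hph⟩ := hhpos (n-i) (by simp only [Finset.mem_Icc]; omega)
      have hB' := hB (n-i) (by omega) (by omega)
      rw [show n+1-(n-i) = i+1 by omega] at hB'
      have hA' := hA i h1 h2
      have hKH' := hKH i h1 h2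
      have hσ : sigC n kp km k hp hm h i * (km i + k i) * (h (n-i) * hp (n-i))
          = (hm (n-i) + h (n-i)) * (k i * kp i) := by
        unfold sigC hst kst
        field_simp
        ring
      refine mul_left_cancel₀
        (a := hp (n-i) * c α * h (n-i) * (km i + k i) * kp i) (by positivity) ?_
      linear_combination (h (n-i) * (km i + k i) * kp i) * hB'
        - ((hm (n-i) + h (n-i)) * (km i + k i) * kp i) * hKH'
        - ((hm (n-i) + h (n-i)) * k i * kp i) * hA'
        - (sigC n kp km k hp hm h i * s i * hp (n-i) * h (n-i) * (km i + k i) * kp i) * hue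
        - (s i * kp i * e) * hσ
    -- value at α
    have hsα : s α = sParam n α kp km k hp hm h (e / c α) α := by
      rw [sParam_alpha hkpos hhpos hα1 hα2, zpow_neg_one]
      obtain ⟨hkp, hkm, hk⟩ := hkpos α (by simp only [Finset.mem_Icc]; omega)
      have hA' := hA α hα1 hα2
      rw [inv_div]
      unfold kst
      field_simp
      linear_combination hA'
    -- upward induction
    have hs_up : ∀ t, α + t ≤ n → s (α+t) = sParam n α kp km k hp hm h (e / c α) (α+t) := by
      intro t
      induction t with
      | zero => intro _; simpa using hsα
      | succ t ih =>
        intro ht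
        rw [show α+(t+1) = (α+t)+1 by omega, hrec (α+t) (by omega) (by omega),
          sParam_succ (ne_of_gt hu) (by omega : 1 ≤ α + t), ih (by omega)]
    -- downward induction
    have hs_down : ∀ t, t ≤ α - 1 → s (α-t) = sParam n α kp km k hp hm h (e / c α) (α-t) := by
      intro t
      induction t with
      | zero => intro _; simpa using hsα
      | succ t ih =>
        intro ht
        have ih' := ih (by omega)
        have hi1 : 1 ≤ α-(t+1) := by omega
        have e1 := hrec (α-(t+1)) hi1 (by omega)
        have e2 := sParam_succ (n := n) (α := α) (kp := kp) (km := km) (k := k)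
          (hp := hp) (hm := hm) (h := h) (u := e / c α) (ne_of_gt hu) hi1
        rw [show α-(t+1)+1 = α-t by omega] at e1 e2
        have hσ0 : sigC n kp km k hp hm h (α-(t+1)) * (e / c α) ≠ 0 :=
          ne_of_gt (mul_pos (sig_pos hkpos hhpos (by omega) (by omega)) hu)
        exact mul_left_cancel₀ hσ0 (by rw [← e1, ← e2]; exact ih')
    have hs_all : ∀ i ∈ Finset.Icc 1 n, s i = sParam n α kp km k hp hm h (e / c α) i := by
      intro i hi
      simp only [Finset.mem_Icc] at hi
      rcases le_or_gt α i with hcase | hcase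
      · rw [show i = α + (i - α) by omega]
        exact hs_up (i-α) (by omega)
      · rw [show i = α - (α - i) by omega]
        exact hs_down (α-i) (by omega)
    refine ⟨hs_all, ?_, ?_⟩
    · intro i hi
      simp only [Finset.mem_Icc] at hi
      obtain ⟨hkp, hkm, hk⟩ := hkpos i (by simp only [Finset.mem_Icc]; omega)
      have hA' := hA i hi.1 hi.2
      have hP := c_of_s hkpos hhpos hn hα1 hα2 (u := e / c α) (e := e) i hi.1 hi.2
      refine mul_left_cancel₀ (a := km i + k i) (by positivity) ?_
      rw [← hA', hs_all i (by simp only [Finset.mem_Icc]; omega), hP]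
    · intro j hj
      simp only [Finset.mem_Icc] at hj
      obtain ⟨hpp, hpm, hph⟩ := hhpos j (by simp only [Finset.mem_Icc]; omega)
      have hQ := d_of_c hkpos hhpos hn hα1 hα2 (u := e / c α) (e := e) j hj.1 hj.2
      have hKH' := hKH (n-j) (by omega) (by omega)
      rw [show n-(n-j) = j by omega] at hKH'
      have hc' : c (n-j) = cParam n α kp km k hp hm h e (e / c α) (n-j) := by
        obtain ⟨hkp, hkm, hk⟩ := hkpos (n-j) (by simp only [Finset.mem_Icc]; omega)
        have hA' := hA (n-j) (by omega) (by omega)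
        have hP := c_of_s hkpos hhpos hn hα1 hα2 (u := e / c α) (e := e) (n-j) (by omega) (by omega)
        refine mul_left_cancel₀ (a := km (n-j) + k (n-j)) (by positivity) ?_
        rw [← hA', hs_all (n-j) (by simp only [Finset.mem_Icc]; omega), hP]
      refine mul_left_cancel₀ (a := h j) (ne_of_gt hph) ?_
      rw [← hKH', hc', hQ]
  ·
    intro e u he hu
    set S := sParam n α kp km k hp hm h u with hS
    set C := cParam n α kp km k hp hm h e u with hCdef
    set D := dParam n α kp km k hp hm h e u with hDdef
    have hC2 : ∀ i, 1 ≤ i → i ≤ n - 1 → k i * C i = h (n-i) * D (n-i) := by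
      intro i h1 h2
      have h3 := d_of_c hkpos hhpos hn hα1 hα2 (e := e) (u := u) (n-i) (by omega) (by omega)
      rw [show n-(n-i) = i by omega] at h3
      linarith
    have hA : ∀ i, 1 ≤ i → i ≤ n - 1 → kp i * S i * e = (km i + k i) * C i :=
      fun i h1 h2 => c_of_s hkpos hhpos hn hα1 hα2 i h1 h2
    have hB : ∀ j, 1 ≤ j → j ≤ n - 1 →
        hp j * S (n+1-j) * C α = (hm j + h j) * D j :=
      fun j h1 h2 => Brel hkpos hhpos hn hα1 hα2 (ne_of_gt hu) j h1 h2
    constructor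
    · refine ⟨?_, he, ?_, ?_⟩
      · intro i hi
        rw [FCunion] at hi
        simp only [Finset.mem_Icc] at hi
        exact sParam_pos hkpos hhpos hα1 hα2 hn hu hi.1 hi.2
      · intro i hi
        simp only [Finset.mem_Icc] at hi
        exact cParam_pos hkpos hhpos hα1 hα2 hn he hu hi.1 hi.2
      · intro j hj
        simp only [Finset.mem_Icc] at hj
        exact dParam_pos hkpos hhpos hα1 hα2 hn he hu hj.1 hj.2
    · refine ⟨?_, ?_, ?_, ?_⟩
      · -- substrate equations
        intro i hi
        rw [FCunion] at hi
        simp only [Finset.mem_Icc] at hi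
        rw [if_pos (by simp only [Finset.mem_Icc]; omega)]
        simp only [Finset.sum_add_distrib,
          show ∀ j : ℕ, n+1-(j+1) = n-j from fun j => by omega]
        unfold Ffwd
        by_cases hi1 : i = 1
        · subst hi1
          rw [sum_ite1z n 1 _ (by omega), sum_ite2 n 1 _ le_rfl (by omega),
            show (1:ℕ)-1 = 0 from rfl, hk0]
          linarith [hA 1 le_rfl (by omega), hC2 1 le_rfl (by omega)]
        · by_cases hin : i = n
          · rw [hin]
            rw [sum_ite1 n n _ hn le_rfl, sum_ite2z n, hkpn, hkmn,
              show n+1-n = 1 by omega]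
            have hB1 := hB 1 le_rfl (by omega)
            rw [show n+1-1 = n by omega] at hB1
            have h2 := hC2 (n-1) (by omega) le_rfl
            rw [show n-(n-1) = 1 by omega] at h2
            linarith
          · rw [sum_ite1 n i _ (by omega) (by omega), sum_ite2 n i _ (by omega) (by omega)]
            have hBi := hB (n+1-i) (by omega) (by omega)
            rw [show n+1-(n+1-i) = i by omega] at hBi
            have h2 := hC2 i (by omega) (by omega)
            have h3 := hC2 (i-1) (by omega) (by omega)
            rw [show n-(i-1) = n+1-i by omega] at h3
            have hAi := hA i (by omega) (by omega)
            linarith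
      · -- enzyme equation
        refine Finset.sum_eq_zero fun i hi => ?_
        simp only [Finset.mem_Icc] at hi
        linarith [hA i hi.1 hi.2]
      · -- C equations
        intro i hi
        simp only [Finset.mem_Icc] at hi
        have hAi := hA i hi.1 hi.2
        by_cases hiα : i = α
        · rw [if_pos hiα]
          have hz : ∑ j ∈ Finset.Icc 1 (n-1),
              (-(hp j) * S ((fun j => n + 1 - j) j) * C α + (hm j + h j) * D j) = 0 :=
            Finset.sum_eq_zero fun j hj => by
              simp only [Finset.mem_Icc] at hj
              have := hB j hj.1 hj.2
              simp only []
              linarith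
          rw [hz]
          linarith
        · rw [if_neg hiα]
          linarith
      · -- D equations
        intro j hj
        simp only [Finset.mem_Icc] at hj
        have := hB j hj.1 hj.2
        simp only []
        linarith
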